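/- For every v ∈ (0,r), the speculator's expected profit is strictly higher under the second-price rule than under the first-price rule for the same equilibrium cutoff: Π*(v) > Π⋆(v). -/

import Mathlib

open MeasureTheory Set

/-- Second-price acquisition price: `p*(v) = v + ∫_v^r (1−F x)^(N−1) dx`. -/
noncomputable def pstar (F : ℝ → ℝ) (N : ℕ) (r : ℝ) (v : ℝ) : ℝ :=
  v + ∫ x in v..r, (1 - F x) ^ (N - 1)

/-- Speculator's expected payment from a second-price subgame against `m` sellers. -/
noncomputable def y (F : ℝ → ℝ) (r : ℝ) (m : ℕ) (v : ℝ) : ℝ :=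
  v + ∫ x in v..r, ((1 - F x) / (1 - F v)) ^ m

/-- Speculator's expected profit in the second-price speculation game at cutoff `v`. -/
noncomputable def PiSPA (F : ℝ → ℝ) (N : ℕ) (r : ℝ) (v : ℝ) : ℝ :=
  (∑ m ∈ Finset.range N,
      (N.choose m : ℝ) * (F v) ^ (N - m) * (1 - F v) ^ m * y F r m v)
    - N * F v * pstar F N r v

/-- Truncated conditional CDF `G(x; v) = (F x − F v)/(1 − F v)`. -/
noncomputable def G (F : ℝ → ℝ) (v x : ℝ) : ℝ := (F x - F v) / (1 - F v)

/-- `ubar_b(m, v) = max_{b ∈ [v, r]} b (1 − G(b; v))^m`. -/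
noncomputable def ubarb (F : ℝ → ℝ) (r : ℝ) (m : ℕ) (v : ℝ) : ℝ :=
  sSup ((fun b => b * (1 - G F v b) ^ m) '' Icc v r)

/-- First-price acquisition price `p⋆(v)`. -/
noncomputable def pFPA (F : ℝ → ℝ) (N : ℕ) (r : ℝ) (v : ℝ) : ℝ :=
  v + (∫ x in v..r, (1 - F x) ^ (N - 1)) +
    ∑ m ∈ Finset.range (N - 1),
      ((N - 1).choose m : ℝ) * (1 - F v) ^ m * (F v) ^ (N - 1 - m) *
        (ubarb F r (m + 1) v - v)

/-- Speculator's expected profit in the first-price speculation game at cutoff `v`. -/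
noncomputable def PiFPA (F : ℝ → ℝ) (N : ℕ) (r : ℝ) (v : ℝ) : ℝ :=
  (∑ m ∈ Finset.Icc 1 (N - 1),
      (N.choose m : ℝ) * (1 - F v) ^ m * (F v) ^ (N - m) * ubarb F r m v)
    + (F v) ^ N * r - N * F v * pFPA F N r v

/-- Algebraic identity combining the two profit expressions. -/
lemma keyalg (n : ℕ) (q r v I : ℝ) (Y U : ℕ → ℝ) (hY0 : Y 0 = r) :
    ((∑ m ∈ Finset.range (n+1), ((n+1).choose m : ℝ) * q^(n+1-m) * (1-q)^m * Y m)
        - ((n:ℝ)+1) * q * (v + I))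
      - ((∑ m ∈ Finset.Icc 1 n, ((n+1).choose m : ℝ) * (1-q)^m * q^(n+1-m) * U m)
          + q^(n+1) * r
          - ((n:ℝ)+1) * q * (v + I
              + ∑ m ∈ Finset.range n, (n.choose m : ℝ) * (1-q)^m * q^(n-m) * (U (m+1) - v)))
    = (∑ k ∈ Finset.range n,
        ((n+1).choose (k+1) : ℝ) * q^(n-k) * (1-q)^(k+1) * (Y (k+1) - U (k+1)))
      + ∑ k ∈ Finset.range n,
          ((n:ℝ)+1) * q * ((n.choose k : ℝ) * (1-q)^k * q^(n-k)) * (U (k+1) - v) := by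
  have h1 : ∑ m ∈ Finset.range (n+1), ((n+1).choose m : ℝ) * q^(n+1-m) * (1-q)^m * Y m
      = (∑ k ∈ Finset.range n, ((n+1).choose (k+1) : ℝ) * q^(n-k) * (1-q)^(k+1) * Y (k+1))
        + q^(n+1) * r := by
    rw [Finset.sum_range_succ']
    simp only [hY0, Nat.succ_sub_succ, Nat.choose_zero_right, Nat.cast_one, pow_zero, one_mul,
      mul_one, Nat.sub_zero]
  have h2 : ∑ m ∈ Finset.Icc 1 n, ((n+1).choose m : ℝ) * (1-q)^m * q^(n+1-m) * U m
      = ∑ k ∈ Finset.range n, ((n+1).choose (k+1) : ℝ) * q^(n-k) * (1-q)^(k+1) * U (k+1) := by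
    rw [← Finset.Ico_add_one_right_eq_Icc, Finset.sum_Ico_eq_sum_range]
    refine Finset.sum_congr (by norm_num) fun k _ => ?_
    rw [add_comm 1 k, Nat.succ_sub_succ]
    ring
  have h4 : ∑ k ∈ Finset.range n,
        ((n+1).choose (k+1) : ℝ) * q^(n-k) * (1-q)^(k+1) * (Y (k+1) - U (k+1))
      = (∑ k ∈ Finset.range n, ((n+1).choose (k+1) : ℝ) * q^(n-k) * (1-q)^(k+1) * Y (k+1))
        - ∑ k ∈ Finset.range n, ((n+1).choose (k+1) : ℝ) * q^(n-k) * (1-q)^(k+1) * U (k+1) := by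
    rw [← Finset.sum_sub_distrib]
    exact Finset.sum_congr rfl fun k _ => by ring
  have h5 : ∑ k ∈ Finset.range n,
        ((n:ℝ)+1) * q * ((n.choose k : ℝ) * (1-q)^k * q^(n-k)) * (U (k+1) - v)
      = ((n:ℝ)+1) * q *
          ∑ k ∈ Finset.range n, (n.choose k : ℝ) * (1-q)^k * q^(n-k) * (U (k+1) - v) := by
    rw [Finset.mul_sum]
    exact Finset.sum_congr rfl fun k _ => by ring
  rw [h1, h2, h4, h5]
  ring

/-- The analytic heart: for `m ≥ 1`, `v ≤ ubarb m v < y m v`. -/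
lemma ubarb_bounds (F : ℝ → ℝ) (hFc : ContinuousOn F (Icc 0 1))
    (hFs : StrictMonoOn F (Icc 0 1)) (hF1 : F 1 = 1)
    (r v : ℝ) (hv0 : 0 < v) (hvr : v < r) (hr1 : r ≤ 1)
    (m : ℕ) (hm : 1 ≤ m) :
    v ≤ ubarb F r m v ∧ ubarb F r m v < y F r m v := by
  have hv01 : v ∈ Icc (0:ℝ) 1 := ⟨hv0.le, hvr.le.trans hr1⟩
  have h101 : (1:ℝ) ∈ Icc (0:ℝ) 1 := ⟨zero_le_one, le_rfl⟩
  have hsub : Icc v r ⊆ Icc (0:ℝ) 1 := Icc_subset_Icc hv0.le hr1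
  have hFv1 : F v < 1 := by
    have := hFs hv01 h101 (lt_of_lt_of_le hvr hr1)
    rwa [hF1] at this
  have ha : 0 < 1 - F v := by linarith
  have hFle1 : ∀ x ∈ Icc v r, F x ≤ 1 := fun x hx => by
    have := hFs.monotoneOn (hsub hx) h101 (hsub hx).2
    rwa [hF1] at this
  have hFlt1 : ∀ x ∈ Ico v r, F x < 1 := fun x hx => by
    have := hFs (hsub ⟨hx.1, hx.2.le⟩) h101 (lt_of_lt_of_le hx.2 hr1)
    rwa [hF1] at this
  set φ : ℝ → ℝ := fun x => ((1 - F x) / (1 - F v)) ^ m with hφ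
  have hGf : (fun b => b * (1 - G F v b) ^ m) = fun b => b * φ b := by
    funext b
    have : 1 - G F v b = (1 - F b) / (1 - F v) := by
      rw [G]; field_simp; ring
    rw [this]
  have hφc : ContinuousOn φ (Icc v r) :=
    (((continuousOn_const.sub (hFc.mono hsub)).div_const _).pow m)
  have hφnn : ∀ x ∈ Icc v r, 0 ≤ φ x := fun x hx =>
    pow_nonneg (div_nonneg (by linarith [hFle1 x hx]) ha.le) m
  have hφanti : ∀ x ∈ Icc v r, ∀ z ∈ Icc v r, x ≤ z → φ z ≤ φ x := by
    intro x hx z hz hxz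
    have hFxz : F x ≤ F z := hFs.monotoneOn (hsub hx) (hsub hz) hxz
    refine pow_le_pow_left₀ (div_nonneg (by linarith [hFle1 z hz]) ha.le) ?_ m
    gcongr
  have hφv : φ v = 1 := by
    simp [hφ, div_self ha.ne']
  have hvmem : v ∈ Icc v r := left_mem_Icc.mpr hvr.le
  have hrmem : r ∈ Icc v r := right_mem_Icc.mpr hvr.le
  have hhc : ContinuousOn (fun b => b * φ b) (Icc v r) :=
    continuousOn_id.mul hφc
  have hcomp : IsCompact ((fun b => b * φ b) '' Icc v r) :=
    isCompact_Icc.image_of_continuousOn hhc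
  have hne : ((fun b => b * φ b) '' Icc v r).Nonempty :=
    (nonempty_Icc.mpr hvr.le).image _
  have hint3 : IntervalIntegrable φ volume v r := by
    apply ContinuousOn.intervalIntegrable
    rwa [uIcc_of_le hvr.le]
  -- pointwise strict bound
  have hpt : ∀ b ∈ Icc v r, b * φ b < y F r m v := by
    rintro b ⟨hvb, hbr⟩
    have hbsub : Icc v b ⊆ Icc v r := Icc_subset_Icc le_rfl hbr
    have hint1 : IntervalIntegrable φ volume v b := by
      apply ContinuousOn.intervalIntegrable
      rw [uIcc_of_le hvb]
      exact hφc.mono hbsub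
    have hint2 : IntervalIntegrable φ volume b r := by
      apply ContinuousOn.intervalIntegrable
      rw [uIcc_of_le hbr]
      exact hφc.mono (Icc_subset_Icc hvb le_rfl)
    have step2 : (b - v) * φ b ≤ ∫ x in v..b, φ x := by
      have hmono := intervalIntegral.integral_mono_on hvb
        (intervalIntegrable_const (c := φ b)) hint1
        (fun x hx => hφanti x (hbsub hx) b ⟨hvb, hbr⟩ hx.2)
      simpa [intervalIntegral.integral_const, smul_eq_mul] using hmono
    have hsplit : (∫ x in v..b, φ x) + ∫ x in b..r, φ x = ∫ x in v..r, φ x :=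
      intervalIntegral.integral_add_adjacent_intervals hint1 hint2
    have h3 : 0 ≤ ∫ x in b..r, φ x :=
      intervalIntegral.integral_nonneg hbr (fun x hx => hφnn x ⟨hvb.trans hx.1, hx.2⟩)
    have hy : y F r m v = v + ∫ x in v..r, φ x := rfl
    rcases eq_or_lt_of_le hvb with heq | hlt
    · -- b = v
      have hIpos : 0 < ∫ x in v..r, φ x := by
        apply intervalIntegral.intervalIntegral_pos_of_pos_on hint3 _ hvr
        intro x hx
        have : F x < 1 := hFlt1 x ⟨hx.1.le, hx.2⟩
        exact pow_pos (div_pos (by linarith) ha) m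
      rw [hy, ← heq, hφv]
      linarith
    · -- v < b
      have hFvb : F v < F b := hFs hv01 (hsub ⟨hvb, hbr⟩) hlt
      have hφb1 : φ b < 1 := by
        apply pow_lt_one₀ (div_nonneg (by linarith [hFle1 b ⟨hvb, hbr⟩]) ha.le)
        · rw [div_lt_one ha]; linarith
        · omega
      have hφbnn : 0 ≤ φ b := hφnn b ⟨hvb, hbr⟩
      have : b * φ b = v * φ b + (b - v) * φ b := by ring
      rw [this, hy]
      have h1 : v * φ b < v := by nlinarith
      linarith
  constructor
  · -- v ≤ ubarb
    rw [ubarb, hGf]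
    have hGvv : (fun b => b * φ b) v = v := by simp [hφv]
    calc v = (fun b => b * φ b) v := hGvv.symm
      _ ≤ sSup ((fun b => b * φ b) '' Icc v r) :=
          le_csSup hcomp.bddAbove (mem_image_of_mem _ hvmem)
  · rw [ubarb, hGf]
    obtain ⟨b, hb, hbeq⟩ := hcomp.sSup_mem hne
    rw [← hbeq]
    exact hpt b hb

theorem PiSPA_gt_PiFPA_same_cutoff
    (F f : ℝ → ℝ) (N : ℕ) (hN : 2 ≤ N)
    (hderiv : ∀ x ∈ Icc (0 : ℝ) 1, HasDerivAt F (f x) x)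
    (hfc : ContinuousOn f (Icc 0 1))
    (hfpos : ∀ x ∈ Ioo (0 : ℝ) 1, 0 < f x)
    (hF0 : F 0 = 0) (hF1 : F 1 = 1)
    (r : ℝ) (hr : r ∈ Ioc (0 : ℝ) 1) :
    ∀ v ∈ Ioo (0 : ℝ) r, PiFPA F N r v < PiSPA F N r v := by
  intro v hv
  obtain ⟨hv0, hvr⟩ := hv
  obtain ⟨hr0, hr1⟩ := hr
  obtain ⟨n, rfl⟩ : ∃ n, N = n + 1 := ⟨N - 1, by omega⟩
  have hn : 1 ≤ n := by omega
  have hFc : ContinuousOn F (Icc 0 1) :=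
    fun x hx => (hderiv x hx).continuousAt.continuousWithinAt
  have hFs : StrictMonoOn F (Icc 0 1) := by
    apply strictMonoOn_of_deriv_pos (convex_Icc 0 1) hFc
    intro x hx
    rw [interior_Icc] at hx
    rw [(hderiv x (Ioo_subset_Icc_self hx)).deriv]
    exact hfpos x hx
  have hv01 : v ∈ Icc (0:ℝ) 1 := ⟨hv0.le, hvr.le.trans hr1⟩
  have hq0 : 0 < F v := by
    have := hFs ⟨le_rfl, zero_le_one⟩ hv01 hv0
    rwa [hF0] at this
  have hq1 : F v < 1 := by
    have := hFs hv01 ⟨zero_le_one, le_rfl⟩ (lt_of_lt_of_le hvr hr1)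
    rwa [hF1] at this
  have ha : 0 < 1 - F v := by linarith
  have hub : ∀ m : ℕ, 1 ≤ m →
      v ≤ ubarb F r m v ∧ ubarb F r m v < y F r m v :=
    fun m hm => ubarb_bounds F hFc hFs hF1 r v hv0 hvr hr1 m hm
  have hy0 : y F r 0 v = r := by
    simp [y]
  have hkey := keyalg n (F v) r v (∫ x in v..r, (1 - F x)^n) (fun m => y F r m v)
      (fun m => ubarb F r m v) hy0
  have hdiff : PiSPA F (n+1) r v - PiFPA F (n+1) r v
      = (∑ k ∈ Finset.range n,
          (((n+1).choose (k+1) : ℝ)) * (F v)^(n-k) * (1 - F v)^(k+1)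
            * (y F r (k+1) v - ubarb F r (k+1) v))
        + ∑ k ∈ Finset.range n,
            ((n:ℝ)+1) * F v * ((n.choose k : ℝ) * (1 - F v)^k * (F v)^(n-k))
              * (ubarb F r (k+1) v - v) := by
    rw [← hkey]
    simp only [PiSPA, PiFPA, pstar, pFPA, Nat.add_sub_cancel]
    push_cast
    ring
  have hpos1 : 0 < ∑ k ∈ Finset.range n,
      (((n+1).choose (k+1) : ℝ)) * (F v)^(n-k) * (1 - F v)^(k+1)
        * (y F r (k+1) v - ubarb F r (k+1) v) := by
    apply Finset.sum_pos
    · intro k hk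
      have hc : 0 < (((n+1).choose (k+1) : ℕ) : ℝ) := by
        exact_mod_cast Nat.choose_pos (by
          have := Finset.mem_range.mp hk; omega)
      exact mul_pos (mul_pos (mul_pos hc (pow_pos hq0 _)) (pow_pos ha _))
        (sub_pos.mpr (hub (k+1) (by omega)).2)
    · exact ⟨0, Finset.mem_range.mpr hn⟩
  have hpos2 : 0 ≤ ∑ k ∈ Finset.range n,
      ((n:ℝ)+1) * F v * ((n.choose k : ℝ) * (1 - F v)^k * (F v)^(n-k))
        * (ubarb F r (k+1) v - v) := by
    apply Finset.sum_nonneg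
    intro k _
    have : (0:ℝ) ≤ (n.choose k : ℝ) := Nat.cast_nonneg _
    apply mul_nonneg
    · apply mul_nonneg (mul_nonneg (by positivity) hq0.le)
      exact mul_nonneg (mul_nonneg this (pow_nonneg ha.le _)) (pow_nonneg hq0.le _)
    · exact sub_nonneg.mpr (hub (k+1) (by omega)).1
  linarith
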